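/- Let H be a real Hilbert space, u ∈ H a snapshot vector, φ_1,…,φ_d an orthonormal family, and suppose u is in the span of φ_1,…,φ_d. If u^n is one of M snapshots u^1,…,u^M with φ_k = (1/√(Mλ_k))·∑_{j=1}^M x_k^j u^j where (λ_k, x_k) are eigenpairs of the correlation matrix K_{ij} = (1/M)⟨u^i, u^j⟩ with orthonormal eigenvectors, then ⟨u^n, φ_i⟩ = √M·√λ_i·x_i^n, and consequently ‖u^n - Π_r u^n‖ = √M·(∑_{i=r+1}^d λ_i (x_i^n)^2)^{1/2} ≤ √M·√λ_{r+1}. -/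

import Mathlib

theorem pod_snapshot_projection_bound
    {H : Type*} [NormedAddCommGroup H] [InnerProductSpace ℝ H]
    (M d : ℕ) (hM : 0 < M)
    (u : Fin M → H)
    (K : Matrix (Fin M) (Fin M) ℝ)
    (hK : ∀ i j, K i j = (1 / (M : ℝ)) * inner ℝ (u i) (u j))
    (lam : Fin d → ℝ) (x : Fin d → EuclideanSpace ℝ (Fin M))
    (hx : Orthonormal ℝ x)
    (heig : ∀ k, K.mulVec (x k) = lam k • (x k))
    (hdesc : ∀ i j : Fin d, i ≤ j → lam j ≤ lam i)
    (hpos : ∀ k, 0 < lam k)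
    (φ : Fin d → H)
    (hφdef : ∀ k, φ k = (1 / Real.sqrt ((M : ℝ) * lam k)) •
        ∑ j : Fin M, (x k j) • u j)
    (hφon : Orthonormal ℝ φ)
    (n : Fin M)
    (hspan : u n = ∑ i : Fin d, (inner ℝ (u n) (φ i) : ℝ) • φ i)
    (r : ℕ) (hr : r + 1 ≤ d) :
    (∀ i : Fin d, (inner ℝ (u n) (φ i) : ℝ) = Real.sqrt M * Real.sqrt (lam i) * x i n) ∧
    ‖u n - ∑ i ∈ Finset.univ.filter (fun i : Fin d => (i : ℕ) < r),
        (inner ℝ (u n) (φ i) : ℝ) • φ i‖ =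
      Real.sqrt M * Real.sqrt
        (∑ i ∈ Finset.univ.filter (fun i : Fin d => r ≤ (i : ℕ)), lam i * (x i n)^2) ∧
    ‖u n - ∑ i ∈ Finset.univ.filter (fun i : Fin d => (i : ℕ) < r),
        (inner ℝ (u n) (φ i) : ℝ) • φ i‖ ≤
      Real.sqrt M * Real.sqrt (lam ⟨r, lt_of_lt_of_le (Nat.lt_succ_self r) hr⟩) := by
  have hMpos : (0 : ℝ) < M := by exact_mod_cast hM
  -- Part 1
  have h1 : ∀ i : Fin d, (inner ℝ (u n) (φ i) : ℝ)
      = Real.sqrt M * Real.sqrt (lam i) * x i n := by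
    intro i
    have hMl : (0 : ℝ) < (M : ℝ) * lam i := mul_pos hMpos (hpos i)
    have key : (inner ℝ (u n) (∑ j : Fin M, (x i j) • u j) : ℝ)
        = (M : ℝ) * (lam i * x i n) := by
      have : ∀ j : Fin M, (inner ℝ (u n) (u j) : ℝ) = (M : ℝ) * K n j := by
        intro j
        rw [hK n j]
        field_simp
      rw [inner_sum]
      simp only [real_inner_smul_right, this]
      have hm : (K.mulVec (x i)) n = lam i * x i n := by
        rw [heig i]; simp [Pi.smul_apply]
      calc ∑ j : Fin M, x i j * ((M : ℝ) * K n j)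
          = (M : ℝ) * ∑ j : Fin M, K n j * x i j := by
            rw [Finset.mul_sum]; congr 1; ext j; ring
        _ = (M : ℝ) * (K.mulVec (x i)) n := by rfl
        _ = (M : ℝ) * (lam i * x i n) := by rw [hm]
    rw [hφdef i, real_inner_smul_right, key]
    have hs : Real.sqrt ((M : ℝ) * lam i) * Real.sqrt ((M : ℝ) * lam i)
        = (M : ℝ) * lam i := Real.mul_self_sqrt hMl.le
    have hsne : Real.sqrt ((M : ℝ) * lam i) ≠ 0 :=
      ne_of_gt (Real.sqrt_pos.mpr hMl)
    rw [Real.sqrt_mul (le_of_lt hMpos)] at hs hsne ⊢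
    rw [div_mul_eq_mul_div, one_mul, div_eq_iff hsne]
    linear_combination (- x i n) * hs
  refine ⟨h1, ?_⟩
  -- The residual
  set c : Fin d → ℝ := fun i => (inner ℝ (u n) (φ i) : ℝ) with hc
  have hsplit : u n - ∑ i ∈ Finset.univ.filter (fun i : Fin d => (i : ℕ) < r), c i • φ i
      = ∑ i ∈ Finset.univ.filter (fun i : Fin d => r ≤ (i : ℕ)), c i • φ i := by
    rw [hspan]
    rw [← Finset.sum_filter_add_sum_filter_not Finset.univ (fun i : Fin d => (i : ℕ) < r)
      (fun i => c i • φ i)]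
    have : Finset.univ.filter (fun i : Fin d => ¬ (i : ℕ) < r)
        = Finset.univ.filter (fun i : Fin d => r ≤ (i : ℕ)) := by
      apply Finset.filter_congr; intro i _; simp [not_lt]
    rw [this]; abel
  rw [hsplit]
  -- norm of the tail
  set s : Finset (Fin d) := Finset.univ.filter (fun i : Fin d => r ≤ (i : ℕ)) with hs
  have hnormsq : ‖∑ i ∈ s, c i • φ i‖ ^ 2 = ∑ i ∈ s, (c i) ^ 2 := by
    have := hφon.inner_sum c c s
    rw [real_inner_self_eq_norm_sq] at this
    simpa [sq] using this
  have hterm : ∀ i : Fin d, (c i) ^ 2 = (M : ℝ) * (lam i * (x i n) ^ 2) := by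
    intro i
    rw [hc]; simp only []
    rw [h1 i]
    have h2 : Real.sqrt (M : ℝ) ^ 2 = (M : ℝ) := Real.sq_sqrt hMpos.le
    have h3 : Real.sqrt (lam i) ^ 2 = lam i := Real.sq_sqrt (hpos i).le
    ring_nf
    linear_combination (x i n)^2 * Real.sqrt (lam i) ^ 2 * h2 + (x i n)^2 * (M:ℝ) * h3
  have hsum : ∑ i ∈ s, (c i) ^ 2 = (M : ℝ) * ∑ i ∈ s, lam i * (x i n) ^ 2 := by
    rw [Finset.mul_sum]; exact Finset.sum_congr rfl fun i _ => hterm i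
  have htail_nonneg : (0 : ℝ) ≤ ∑ i ∈ s, lam i * (x i n) ^ 2 :=
    Finset.sum_nonneg fun i _ => mul_nonneg (hpos i).le (sq_nonneg _)
  have hnorm : ‖∑ i ∈ s, c i • φ i‖
      = Real.sqrt M * Real.sqrt (∑ i ∈ s, lam i * (x i n) ^ 2) := by
    have : ‖∑ i ∈ s, c i • φ i‖ = Real.sqrt (∑ i ∈ s, (c i) ^ 2) := by
      rw [← hnormsq, Real.sqrt_sq (norm_nonneg _)]
    rw [this, hsum, Real.sqrt_mul hMpos.le]
  refine ⟨hnorm, ?_⟩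
  rw [hnorm]
  -- bound
  set ir : Fin d := ⟨r, lt_of_lt_of_le (Nat.lt_succ_self r) hr⟩ with hir
  have hbessel : ∑ i : Fin d, (x i n) ^ 2 ≤ 1 := by
    have := hx.sum_inner_products_le (x := EuclideanSpace.single n (1 : ℝ))
      (s := Finset.univ)
    simp only [EuclideanSpace.norm_single, norm_one, one_pow] at this
    calc ∑ i : Fin d, (x i n) ^ 2
        = ∑ i : Fin d, ‖(inner ℝ (x i) (EuclideanSpace.single n (1 : ℝ)) : ℝ)‖ ^ 2 := by
          refine Finset.sum_congr rfl fun i _ => ?_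
          rw [EuclideanSpace.inner_single_right]
          simp [Real.norm_eq_abs, sq_abs]
      _ ≤ 1 := this
  have hsumle : ∑ i ∈ s, lam i * (x i n) ^ 2 ≤ lam ir := by
    have h1' : ∑ i ∈ s, lam i * (x i n) ^ 2 ≤ ∑ i ∈ s, lam ir * (x i n) ^ 2 := by
      refine Finset.sum_le_sum fun i hi => ?_
      have hri : ir ≤ i := by
        rw [hs, Finset.mem_filter] at hi
        exact hi.2
      exact mul_le_mul_of_nonneg_right (hdesc ir i hri) (sq_nonneg _)
    have h2' : ∑ i ∈ s, lam ir * (x i n) ^ 2 = lam ir * ∑ i ∈ s, (x i n) ^ 2 := by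
      rw [Finset.mul_sum]
    have h3' : ∑ i ∈ s, (x i n) ^ 2 ≤ ∑ i : Fin d, (x i n) ^ 2 :=
      Finset.sum_le_sum_of_subset_of_nonneg (Finset.filter_subset _ _)
        (fun i _ _ => sq_nonneg _)
    calc ∑ i ∈ s, lam i * (x i n) ^ 2 ≤ lam ir * ∑ i ∈ s, (x i n) ^ 2 := by
          rw [← h2']; exact h1'
      _ ≤ lam ir * 1 := mul_le_mul_of_nonneg_left (h3'.trans hbessel) (hpos ir).le
      _ = lam ir := mul_one _
  exact mul_le_mul_of_nonneg_left (Real.sqrt_le_sqrt hsumle) (Real.sqrt_nonneg _)
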